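/- Let q ≥ 1 be an integer and s ∈ (0,1). If λ ∈ ℂ satisfies |λ − exp(2πip/q)| ≥ s for every integer p with 0 ≤ p ≤ q−1, then |1 − λ^q| ≥ min(2qs/5, 1/5). -/

import Mathlib

lemma abs_re_exp_sub_one_sq (r α : ℝ) :
    ‖(r : ℂ) * Complex.exp ((α : ℂ) * Complex.I) - 1‖ ^ 2
      = (r - 1) ^ 2 + 4 * r * Real.sin (α / 2) ^ 2 := by
  have hc : Real.cos α = 1 - 2 * Real.sin (α / 2) ^ 2 := by
    have h1 := Real.cos_two_mul (α / 2)
    have h2 := Real.cos_sq' (α / 2)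
    rw [show (2 : ℝ) * (α / 2) = α by ring] at h1
    rw [h1, h2]; ring
  have hpy := Real.sin_sq_add_cos_sq α
  rw [Complex.sq_norm, Complex.normSq_apply]
  simp only [Complex.sub_re, Complex.sub_im, Complex.mul_re, Complex.mul_im,
    Complex.ofReal_re, Complex.ofReal_im, Complex.exp_ofReal_mul_I_re,
    Complex.exp_ofReal_mul_I_im, Complex.one_re, Complex.one_im]
  linear_combination r^2 * hpy - 2*r*hc

set_option maxHeartbeats 1000000 in
/-- Let `q ≥ 1` be an integer and `s ∈ (0,1)`. If `λ ∈ ℂ` satisfies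
`|λ − exp(2πip/q)| ≥ s` for every integer `p` with `0 ≤ p ≤ q−1`, then
`|1 − λ^q| ≥ min(2qs/5, 1/5)`. -/
theorem dist_one_pow_ge_of_dist_roots_of_unity
    (q : ℕ) (hq : 1 ≤ q) (s : ℝ) (hs : s ∈ Set.Ioo (0 : ℝ) 1) (lam : ℂ)
    (h : ∀ p : ℕ, p ≤ q - 1 →
      s ≤ ‖lam - Complex.exp (2 * (Real.pi : ℂ) * Complex.I * (p : ℂ) / (q : ℂ))‖) :
    min (2 * (q : ℝ) * s / 5) (1 / 5) ≤ ‖1 - lam ^ q‖ := by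
  obtain ⟨hs0, hs1⟩ := hs
  have hqR : (1 : ℝ) ≤ (q : ℝ) := by exact_mod_cast hq
  have hqR0 : (0 : ℝ) < (q : ℝ) := by linarith
  set r : ℝ := ‖lam‖ with hr
  have hr0 : 0 ≤ r := norm_nonneg lam
  have habs_pow : ‖lam ^ q‖ = r ^ q := by
    rw [norm_pow]
  have habs_rev : ‖1 - lam ^ q‖ = ‖lam ^ q - 1‖ := by
    rw [norm_sub_rev]
  -- Case 1 : r large
  rcases le_or_gt (1 + 1 / (4 * (q:ℝ))) r with hbig | hsmall1
  · have hber : (1 : ℝ) + q * (1 / (4 * q)) ≤ (1 + 1 / (4 * q)) ^ q := by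
      have := one_add_mul_le_pow (a := 1 / (4 * (q:ℝ))) (le_trans (by norm_num : (-2:ℝ) ≤ 0) (by positivity) : (-2:ℝ) ≤ 1/(4*(q:ℝ))) q
      linarith [this]
    have h1 : (5 : ℝ) / 4 ≤ r ^ q := by
      have : (1 + 1 / (4 * (q:ℝ))) ^ q ≤ r ^ q := pow_le_pow_left₀ (by positivity) hbig q
      have hqq : (q : ℝ) * (1 / (4 * q)) = 1 / 4 := by field_simp
      nlinarith
    have h2 : r ^ q - 1 ≤ ‖1 - lam ^ q‖ := by
      rw [habs_rev]
      calc r ^ q - 1 = ‖lam ^ q‖ - ‖(1:ℂ)‖ := by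
            rw [habs_pow, norm_one]
        _ ≤ ‖lam ^ q - 1‖ := norm_sub_norm_le _ _
        _ = ‖lam ^ q - 1‖ := rfl
    calc min (2 * (q : ℝ) * s / 5) (1/5) ≤ 1/5 := min_le_right _ _
      _ ≤ ‖1 - lam ^ q‖ := by linarith
  rcases le_or_gt r (1 - 1 / (4 * (q:ℝ))) with hlow | hbig1
  -- Case 2 : r small
  · have hx0 : (0:ℝ) < 1 / (4 * q) := by positivity
    have hx1 : 1 / (4 * (q:ℝ)) ≤ 1/4 := by
      rw [div_le_div_iff₀ (by positivity) (by norm_num)]; linarith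
    have hber : (1 : ℝ) + q * (1 / (4 * q)) ≤ (1 + 1 / (4 * q)) ^ q :=
      one_add_mul_le_pow (le_trans (by norm_num : (-2:ℝ) ≤ 0) (by positivity) : (-2:ℝ) ≤ 1/(4*(q:ℝ))) q
    have hqq : (q : ℝ) * (1 / (4 * q)) = 1 / 4 := by field_simp
    have hmul : (1 - 1/(4*(q:ℝ)))^q * (1 + 1/(4*(q:ℝ)))^q ≤ 1 := by
      rw [← mul_pow]
      have : (1 - 1/(4*(q:ℝ))) * (1 + 1/(4*(q:ℝ))) ≤ 1 := by nlinarith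
      calc ((1 - 1/(4*(q:ℝ))) * (1 + 1/(4*(q:ℝ))))^q ≤ 1 ^ q := by
            apply pow_le_pow_left₀ (by nlinarith) this
        _ = 1 := one_pow q
    have h1 : r ^ q ≤ 4/5 := by
      have hle : r ^ q ≤ (1 - 1/(4*(q:ℝ)))^q := pow_le_pow_left₀ hr0 hlow q
      have hpos : (0:ℝ) < (1 + 1/(4*(q:ℝ)))^q := by positivity
      nlinarith
    have h2 : 1 - r ^ q ≤ ‖1 - lam ^ q‖ := by
      calc 1 - r ^ q = ‖(1:ℂ)‖ - ‖lam ^ q‖ := by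
            rw [habs_pow, norm_one]
        _ ≤ ‖1 - lam ^ q‖ := norm_sub_norm_le _ _
        _ = ‖1 - lam ^ q‖ := rfl
    calc min (2 * (q : ℝ) * s / 5) (1/5) ≤ 1/5 := min_le_right _ _
      _ ≤ ‖1 - lam ^ q‖ := by linarith
  -- Main case : |r - 1| < 1/(4q)
  · have hx1 : 1 / (4 * (q:ℝ)) ≤ 1/4 := by
      rw [div_le_div_iff₀ (by positivity) (by norm_num)]; linarith
    have hr_lo : 3/4 ≤ r := by linarith
    have hr_hi : r ≤ 5/4 := by linarith
    have hlam0 : lam ≠ 0 := by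
      intro h0; rw [h0, norm_zero] at hr; linarith
    set θ : ℝ := Complex.arg lam with hθ
    have hpolar : (r : ℂ) * Complex.exp ((θ:ℂ) * Complex.I) = lam :=
      Complex.norm_mul_exp_arg_mul_I lam
    set k : ℤ := round ((q:ℝ) * θ / (2 * Real.pi)) with hk
    set ψ : ℝ := θ - 2 * Real.pi * k / q with hψdef
    have hpi : 0 < Real.pi := Real.pi_pos
    have hψ : |ψ| ≤ Real.pi / q := by
      have h1 : |(q:ℝ) * θ / (2 * Real.pi) - k| ≤ 1/2 := abs_sub_round _
      have h2 : ψ = ((q:ℝ) * θ / (2 * Real.pi) - k) * (2 * Real.pi / q) := by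
        rw [hψdef]; field_simp
      rw [h2, abs_mul, abs_of_pos (by positivity : (0:ℝ) < 2 * Real.pi / q)]
      calc |(q:ℝ) * θ / (2 * Real.pi) - k| * (2 * Real.pi / q)
          ≤ (1/2) * (2 * Real.pi / q) := by
            apply mul_le_mul_of_nonneg_right h1 (by positivity)
        _ = Real.pi / q := by ring
    -- the hypothesis applied to p = k mod q
    set p : ℕ := (k % q).toNat with hp
    have hq0 : (0:ℤ) < (q:ℤ) := by exact_mod_cast hq
    have hpk : (p : ℤ) = k % q := Int.toNat_of_nonneg (Int.emod_nonneg k (by omega))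
    have hplt : p < q := by
      have := Int.emod_lt_of_pos k hq0
      omega
    have hple : p ≤ q - 1 := by omega
    have hkZ : (q:ℤ) * (k / q) + (p:ℤ) = k := by
      rw [hpk]; exact Int.mul_ediv_add_emod k q
    have hqC : ((q:ℕ):ℂ) ≠ 0 := by exact_mod_cast (by omega : q ≠ 0)
    have hkC : ((q:ℕ):ℂ) * ((k / (q:ℤ) : ℤ):ℂ) + ((p:ℕ):ℂ) = (k:ℂ) := by
      exact_mod_cast hkZ
    have hroot : Complex.exp (2 * (Real.pi : ℂ) * Complex.I * (p : ℂ) / (q : ℂ))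
        = Complex.exp (((2 * Real.pi * k / q : ℝ) : ℂ) * Complex.I) := by
      have hexp : (((2 * Real.pi * k / q : ℝ) : ℂ) * Complex.I)
          = 2 * (Real.pi : ℂ) * Complex.I * (p : ℂ) / (q : ℂ)
            + ((k / (q:ℤ) : ℤ) : ℂ) * (2 * (Real.pi:ℂ) * Complex.I) := by
        push_cast
        field_simp
        linear_combination (-1 : ℂ) * hkC
      rw [hexp, Complex.exp_add, Complex.exp_int_mul_two_pi_mul_I, mul_one]
    have hdist := h p hple
    rw [hroot] at hdist
    -- rewrite the distance in polar form
    have hψC : (ψ:ℂ) = (θ:ℂ) - 2*(Real.pi:ℂ)*(k:ℂ)/((q:ℕ):ℂ) := by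
      rw [hψdef]; push_cast; ring
    have hfactor : lam - Complex.exp (((2 * Real.pi * k / q : ℝ) : ℂ) * Complex.I)
        = Complex.exp (((2 * Real.pi * k / q : ℝ) : ℂ) * Complex.I)
          * ((r : ℂ) * Complex.exp ((ψ:ℂ) * Complex.I) - 1) := by
      have h1 : (((2 * Real.pi * k / q : ℝ):ℂ) * Complex.I) + (ψ:ℂ) * Complex.I
          = (θ:ℂ) * Complex.I := by
        rw [hψC]; push_cast; ring
      calc lam - Complex.exp (((2 * Real.pi * k / q : ℝ) : ℂ) * Complex.I)
          = (r:ℂ) * Complex.exp ((θ:ℂ) * Complex.I)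
            - Complex.exp (((2 * Real.pi * k / q : ℝ) : ℂ) * Complex.I) := by
            rw [hpolar]
        _ = Complex.exp (((2 * Real.pi * k / q : ℝ) : ℂ) * Complex.I)
            * ((r : ℂ) * Complex.exp ((ψ:ℂ) * Complex.I) - 1) := by
            rw [← h1, Complex.exp_add]; ring
    have hdist2 : s ≤ ‖(r : ℂ) * Complex.exp ((ψ:ℂ) * Complex.I) - 1‖ := by
      rwa [hfactor, norm_mul, Complex.norm_exp_ofReal_mul_I, one_mul] at hdist
    have hs_sq : s ^ 2 ≤ (r - 1) ^ 2 + 4 * r * Real.sin (ψ / 2) ^ 2 := by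
      rw [← abs_re_exp_sub_one_sq]
      exact pow_le_pow_left₀ (le_of_lt hs0) hdist2 2
    -- rewrite |1 - lam^q| in polar form
    have hpow : ‖1 - lam ^ q‖ ^ 2
        = ((r^q : ℝ) - 1) ^ 2 + 4 * (r^q) * Real.sin ((q:ℝ) * ψ / 2) ^ 2 := by
      have hlampow : lam ^ q = ((r^q : ℝ) : ℂ)
          * Complex.exp ((((q:ℝ) * ψ : ℝ):ℂ) * Complex.I) := by
        rw [← hpolar, mul_pow, ← Complex.exp_nat_mul]
        push_cast
        congr 1
        have hexp2 : ((q:ℕ):ℂ) * ((θ:ℂ) * Complex.I)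
            = ((q:ℕ):ℂ) * (ψ:ℂ) * Complex.I + (k:ℂ) * (2 * (Real.pi:ℂ) * Complex.I) := by
          rw [hψC]; field_simp; ring
        rw [hexp2, Complex.exp_add, Complex.exp_int_mul_two_pi_mul_I, mul_one]
      rw [habs_rev, hlampow]
      exact abs_re_exp_sub_one_sq (r^q) ((q:ℝ) * ψ)
    -- lower bound on r^q
    have hrq_lo : 3/4 ≤ r ^ q := by
      have h1 : (1 - 1/(4*(q:ℝ)))^q ≤ r^q := pow_le_pow_left₀ (by linarith) hbig1.le q
      have h2 : (1:ℝ) + (q:ℝ) * (-(1/(4*(q:ℝ)))) ≤ (1 + (-(1/(4*(q:ℝ)))))^q :=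
        one_add_mul_le_pow (by have : (0:ℝ) < 1/(4*(q:ℝ)) := by positivity
                               linarith) q
      have hqq : (q:ℝ) * (1/(4*(q:ℝ))) = 1/4 := by field_simp
      have h3 : (1 + (-(1/(4*(q:ℝ)))))^q = (1 - 1/(4*(q:ℝ)))^q := by ring_nf
      rw [h3] at h2
      linarith
    -- |r^q - 1| ≥ (3/4) q |r-1|, squared form
    have A1sq : (9/16) * (q:ℝ)^2 * (r-1)^2 ≤ (r^q - 1)^2 := by
      rcases le_or_gt 1 r with h1 | h1
      · have hber := one_add_mul_le_pow (show (-2:ℝ) ≤ r - 1 by linarith) q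
        rw [show (1:ℝ) + (r - 1) = r by ring] at hber
        nlinarith [mul_nonneg (le_of_lt hqR0) (by linarith : (0:ℝ) ≤ r - 1)]
      · have hsum : (q:ℝ) * r^q ≤ ∑ i ∈ Finset.range q, r^i := by
          have : ∀ i ∈ Finset.range q, r^q ≤ r^i := fun i hi =>
            pow_le_pow_of_le_one hr0 h1.le (le_of_lt (Finset.mem_range.mp hi))
          calc (q:ℝ) * r^q = ∑ _i ∈ Finset.range q, r^q := by
                rw [Finset.sum_const, Finset.card_range, nsmul_eq_mul]
            _ ≤ ∑ i ∈ Finset.range q, r^i := Finset.sum_le_sum this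
        have hgeom := geom_sum_mul r q
        have hsum0 : (0:ℝ) ≤ ∑ i ∈ Finset.range q, r^i :=
          Finset.sum_nonneg fun i _ => pow_nonneg hr0 i
        have key : (3/4) * (q:ℝ) * (1 - r) ≤ 1 - r^q := by
          have h2 : (q:ℝ) * r^q * (1-r) ≤ (∑ i ∈ Finset.range q, r^i) * (1-r) :=
            mul_le_mul_of_nonneg_right hsum (by linarith)
          nlinarith [mul_nonneg (mul_nonneg (le_of_lt hqR0) hr0) (by linarith : (0:ℝ) ≤ 1-r)]
        have key0 : (0:ℝ) ≤ (3/4) * (q:ℝ) * (1 - r) := by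
          have : (0:ℝ) ≤ 1 - r := by linarith
          positivity
        nlinarith [key, key0]
    -- sin bound from below
    have hψπ : (q:ℝ) * |ψ| / 2 ≤ Real.pi / 2 := by
      have := mul_le_mul_of_nonneg_left hψ (le_of_lt hqR0)
      rw [mul_div_assoc'] at this
      have hq' : (q:ℝ) * Real.pi / (q:ℝ) = Real.pi := by field_simp
      nlinarith
    have hsin_eq : Real.sin ((q:ℝ) * ψ / 2)^2 = Real.sin ((q:ℝ) * |ψ| / 2)^2 := by
      rcases abs_cases ψ with ⟨h1, _⟩ | ⟨h1, _⟩
      · rw [h1]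
      · rw [h1, show (q:ℝ) * -ψ / 2 = -((q:ℝ) * ψ / 2) by ring, Real.sin_neg]
        ring
    have A2 : (q:ℝ)^2 * ψ^2 / Real.pi^2 ≤ Real.sin ((q:ℝ) * ψ / 2)^2 := by
      have hms := Real.mul_le_sin (x := (q:ℝ) * |ψ| / 2) (by positivity) hψπ
      have h2 : (2 / Real.pi) * ((q:ℝ) * |ψ| / 2) = (q:ℝ) * |ψ| / Real.pi := by
        field_simp
      rw [h2] at hms
      have h3 : (0:ℝ) ≤ (q:ℝ) * |ψ| / Real.pi := by positivity
      have h4 : ((q:ℝ) * |ψ| / Real.pi)^2 ≤ Real.sin ((q:ℝ) * |ψ| / 2)^2 :=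
        pow_le_pow_left₀ h3 hms 2
      rw [hsin_eq]
      calc (q:ℝ)^2 * ψ^2 / Real.pi^2 = ((q:ℝ) * |ψ| / Real.pi)^2 := by
            rw [div_pow, mul_pow, sq_abs]
        _ ≤ _ := h4
    -- upper bound for s²
    have hs_sq' : s^2 ≤ (r-1)^2 + (5/4) * ψ^2 := by
      have h1 : Real.sin (ψ/2)^2 ≤ (ψ/2)^2 := Real.sin_sq_le_sq
      nlinarith [hs_sq, sq_nonneg (ψ/2)]
    -- put it together
    have hπ2 : Real.pi^2 < 10 := by nlinarith [Real.pi_lt_d2, Real.pi_pos]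
    have A2' : (q:ℝ)^2 * ψ^2 ≤ 10 * Real.sin ((q:ℝ) * ψ / 2)^2 := by
      have h0 := mul_le_mul_of_nonneg_left A2 (sq_nonneg Real.pi)
      have he : Real.pi^2 * ((q:ℝ)^2 * ψ^2 / Real.pi^2) = (q:ℝ)^2 * ψ^2 := by
        field_simp
      rw [he] at h0
      have h5 : Real.pi^2 * Real.sin ((q:ℝ) * ψ / 2)^2 ≤ 10 * Real.sin ((q:ℝ) * ψ / 2)^2 :=
        mul_le_mul_of_nonneg_right hπ2.le (sq_nonneg _)
      linarith
    have hq2s : (q:ℝ)^2 * s^2 ≤ (q:ℝ)^2 * ((r-1)^2 + (5/4) * ψ^2) :=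
      mul_le_mul_of_nonneg_left hs_sq' (by positivity)
    have hrqsin : (3/4) * Real.sin ((q:ℝ) * ψ / 2)^2 ≤ r^q * Real.sin ((q:ℝ) * ψ / 2)^2 :=
      mul_le_mul_of_nonneg_right hrq_lo (sq_nonneg _)
    clear_value r θ k ψ p
    clear h hpolar hroot hdist hψC hfactor hdist2 hkZ hkC hk hp hpk hθ hψdef hr hψπ
    have hfinal : (2 * (q:ℝ) * s / 5)^2 ≤ ‖1 - lam ^ q‖ ^ 2 := by
      rw [hpow]
      have hexp : (2 * (q:ℝ) * s / 5)^2 = (4/25) * ((q:ℝ)^2 * s^2) := by ring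
      rw [hexp]
      linarith [hq2s, A1sq, A2', hrqsin, sq_nonneg ((q:ℝ) * (r-1)),
        sq_nonneg (Real.sin ((q:ℝ) * ψ / 2))]
    have h0 : 0 ≤ ‖1 - lam ^ q‖ := norm_nonneg _
    have h1 : (0:ℝ) < 2 * (q:ℝ) * s / 5 := by positivity
    calc min (2 * (q : ℝ) * s / 5) (1/5) ≤ 2 * (q:ℝ) * s / 5 := min_le_left _ _
      _ ≤ ‖1 - lam ^ q‖ := (pow_le_pow_iff_left₀ h1.le h0 two_ne_zero).mp hfinal
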